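/- There is no function φ : (0,∞) → (0,∞) that is differentiable with φ'(λ) ≥ 0 for all λ > 0 and simultaneously satisfies: (i) there exist σ > 0, λ₀ > 0 and δ ∈ (0,1] such that φ'(λx) ≤ σ·x^{−δ}·φ'(λ) for all x ≥ 1 and λ ≥ λ₀; and (ii) there exist c > 0 and Λ > e such that φ(λ) ≥ c·λ/log λ for all λ ≥ Λ. -/

import Mathlib

open Filter Real

set_option maxHeartbeats 800000 in
theorem stmt13 :
    ¬ ∃ (φ φ' : ℝ → ℝ),
      (∀ l : ℝ, 0 < l → 0 < φ l) ∧
      (∀ l : ℝ, 0 < l → HasDerivAt φ (φ' l) l) ∧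
      (∀ l : ℝ, 0 < l → 0 ≤ φ' l) ∧
      (∃ σ lam₀ δ : ℝ, 0 < σ ∧ 0 < lam₀ ∧ 0 < δ ∧ δ ≤ 1 ∧
        ∀ x l : ℝ, 1 ≤ x → lam₀ ≤ l → φ' (l * x) ≤ σ * x ^ (-δ) * φ' l) ∧
      (∃ c Λ : ℝ, 0 < c ∧ Real.exp 1 < Λ ∧
        ∀ l : ℝ, Λ ≤ l → c * l / Real.log l ≤ φ l) := by
  rintro ⟨φ, φ', hpos, hderiv, hd0, ⟨σ, lam₀, δ, hσ, hlam₀, hδ, hδ1, hscale⟩,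
    c, Λ, hc, hΛ, hgrow⟩
  set ε : ℝ := δ / 2 with hεdef
  have hε : 0 < ε := by positivity
  have hε1 : ε < 1 := by simp only [hεdef]; linarith
  set L : ℝ := max lam₀ 1 with hLdef
  have hL1 : (1:ℝ) ≤ L := le_max_right _ _
  have hLlam : lam₀ ≤ L := le_max_left _ _
  have hL0 : (0:ℝ) < L := lt_of_lt_of_le one_pos hL1
  have hφ'lam₀ : 0 ≤ φ' lam₀ := hd0 lam₀ hlam₀
  set A : ℝ := σ * lam₀ ^ δ * φ' lam₀ with hAdef
  have hpowlam : (0:ℝ) ≤ lam₀ ^ δ := Real.rpow_nonneg hlam₀.le δ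
  have hA0 : 0 ≤ A := by positivity
  -- derivative bound : φ' l ≤ A * l ^ (-ε) for l ≥ L
  have hbound : ∀ l : ℝ, L ≤ l → φ' l ≤ A * l ^ (-ε) := by
    intro l hl
    have hl1 : (1:ℝ) ≤ l := hL1.trans hl
    have hl0 : (0:ℝ) < l := lt_of_lt_of_le one_pos hl1
    have hx : (1:ℝ) ≤ l / lam₀ := (one_le_div hlam₀).2 (hLlam.trans hl)
    have h := hscale (l / lam₀) lam₀ hx le_rfl
    have hml : lam₀ * (l / lam₀) = l := by field_simp
    rw [hml] at h
    have hrpow : (l / lam₀) ^ (-δ) = l ^ (-δ) * lam₀ ^ δ := by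
      rw [Real.div_rpow hl0.le hlam₀.le, Real.rpow_neg hlam₀.le, div_eq_mul_inv, inv_inv]
    have h2 : φ' l ≤ A * l ^ (-δ) := by
      calc φ' l ≤ σ * (l / lam₀) ^ (-δ) * φ' lam₀ := h
        _ = A * l ^ (-δ) := by rw [hrpow]; ring
    have h3 : l ^ (-δ) ≤ l ^ (-ε) :=
      Real.rpow_le_rpow_of_exponent_le hl1 (by simp only [hεdef]; linarith)
    calc φ' l ≤ A * l ^ (-δ) := h2
      _ ≤ A * l ^ (-ε) := mul_le_mul_of_nonneg_left h3 hA0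
  set B : ℝ := A / (1 - ε) with hBdef
  have hB0 : 0 ≤ B := div_nonneg hA0 (by linarith)
  have hBA : B * (1 - ε) = A := div_mul_cancel₀ A (by linarith : (1:ℝ) - ε ≠ 0)
  set g : ℝ → ℝ := fun t => φ t - B * t ^ (1 - ε) with hgdef
  have hg' : ∀ t : ℝ, 0 < t → HasDerivAt g (φ' t - A * t ^ (-ε)) t := by
    intro t ht
    have h1 := hderiv t ht
    have h2 : HasDerivAt (fun t : ℝ => t ^ (1 - ε)) ((1 - ε) * t ^ (1 - ε - 1)) t :=
      Real.hasDerivAt_rpow_const (Or.inl ht.ne')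
    have h3 := h1.sub (h2.const_mul B)
    have he : 1 - ε - 1 = -ε := by ring
    have : B * ((1 - ε) * t ^ (1 - ε - 1)) = A * t ^ (-ε) := by
      rw [he, ← mul_assoc, hBA]
    rw [this] at h3
    exact h3
  have hanti : AntitoneOn g (Set.Ici L) := by
    refine antitoneOn_of_deriv_nonpos (convex_Ici L) ?_ ?_ ?_
    · intro t ht
      have ht0 : 0 < t := lt_of_lt_of_le hL0 ht
      exact (hg' t ht0).continuousAt.continuousWithinAt
    · intro t ht
      rw [interior_Ici] at ht
      have ht0 : 0 < t := lt_trans hL0 ht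
      exact (hg' t ht0).differentiableAt.differentiableWithinAt
    · intro t ht
      rw [interior_Ici] at ht
      have ht0 : 0 < t := lt_trans hL0 ht
      rw [(hg' t ht0).deriv]
      have := hbound t ht.le
      linarith
  have hφbound : ∀ t : ℝ, L ≤ t → φ t ≤ g L + B * t ^ (1 - ε) := by
    intro t ht
    have := hanti (Set.self_mem_Ici) ht ht
    simp only [hgdef] at this ⊢
    linarith
  set C₀ : ℝ := g L with hC₀def
  -- eventual inequalities
  have h1 : ∀ᶠ t in atTop, Real.log t ≤ c / (4 * (B + 1)) * t ^ ε := by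
    have h := (isLittleO_log_rpow_atTop hε).def
      (by positivity : (0:ℝ) < c / (4 * (B + 1)))
    filter_upwards [h, eventually_ge_atTop (1:ℝ)] with t ht ht1
    have hlog : 0 ≤ Real.log t := Real.log_nonneg ht1
    have hr : 0 ≤ t ^ ε := Real.rpow_nonneg (by linarith) ε
    simpa [Real.norm_eq_abs, abs_of_nonneg hlog, abs_of_nonneg hr] using ht
  have h2 : ∀ᶠ t in atTop, Real.log t ≤ c / (4 * (|C₀| + 1)) * t := by
    have h := Real.isLittleO_log_id_atTop.def
      (by positivity : (0:ℝ) < c / (4 * (|C₀| + 1)))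
    filter_upwards [h, eventually_ge_atTop (1:ℝ)] with t ht ht1
    have hlog : 0 ≤ Real.log t := Real.log_nonneg ht1
    simpa [Real.norm_eq_abs, abs_of_nonneg hlog, abs_of_nonneg (by linarith : (0:ℝ) ≤ t)]
      using ht
  obtain ⟨t, h1t, h2t, htL, htΛ⟩ :=
    (h1.and (h2.and ((eventually_ge_atTop L).and (eventually_ge_atTop Λ)))).exists
  -- now derive contradiction at t
  have ht1 : (1:ℝ) ≤ t := hL1.trans htL
  have ht0 : (0:ℝ) < t := lt_of_lt_of_le one_pos ht1
  have hlogpos : 0 < Real.log t := by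
    have he : Real.log (Real.exp 1) < Real.log t :=
      Real.log_lt_log (Real.exp_pos 1) (lt_of_lt_of_le hΛ htΛ)
    rw [Real.log_exp] at he
    linarith
  have hlow := hgrow t htΛ
  have hct : c * t ≤ φ t * Real.log t := by
    rw [div_le_iff₀ hlogpos] at hlow
    linarith [hlow]
  have hup : φ t ≤ C₀ + B * t ^ (1 - ε) := hφbound t htL
  have hmul : φ t * Real.log t ≤ (C₀ + B * t ^ (1 - ε)) * Real.log t :=
    mul_le_mul_of_nonneg_right hup hlogpos.le
  have hterm1 : C₀ * Real.log t ≤ c / 4 * t := by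
    have hle : C₀ * Real.log t ≤ (|C₀| + 1) * Real.log t :=
      mul_le_mul_of_nonneg_right (by have := le_abs_self C₀; linarith) hlogpos.le
    have h2t' : (|C₀| + 1) * Real.log t ≤ (|C₀| + 1) * (c / (4 * (|C₀| + 1)) * t) :=
      mul_le_mul_of_nonneg_left h2t (by positivity)
    have habs : (0:ℝ) < |C₀| + 1 := by positivity
    have heq : (|C₀| + 1) * (c / (4 * (|C₀| + 1)) * t) = c / 4 * t := by
      field_simp
    calc C₀ * Real.log t ≤ (|C₀| + 1) * Real.log t := hle
      _ ≤ (|C₀| + 1) * (c / (4 * (|C₀| + 1)) * t) := h2t'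
      _ = c / 4 * t := heq
  have hterm2 : B * t ^ (1 - ε) * Real.log t ≤ c / 4 * t := by
    have hrp : (0:ℝ) ≤ t ^ (1 - ε) := Real.rpow_nonneg ht0.le _
    have step1 : B * t ^ (1 - ε) * Real.log t ≤ (B + 1) * t ^ (1 - ε) * Real.log t := by
      have : B * t ^ (1 - ε) ≤ (B + 1) * t ^ (1 - ε) :=
        mul_le_mul_of_nonneg_right (by linarith) hrp
      exact mul_le_mul_of_nonneg_right this hlogpos.le
    have step2 : (B + 1) * t ^ (1 - ε) * Real.log t ≤
        (B + 1) * t ^ (1 - ε) * (c / (4 * (B + 1)) * t ^ ε) := by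
      apply mul_le_mul_of_nonneg_left h1t
      positivity
    have hpow : t ^ (1 - ε) * t ^ ε = t := by
      rw [← Real.rpow_add ht0]
      norm_num
    have step3 : (B + 1) * t ^ (1 - ε) * (c / (4 * (B + 1)) * t ^ ε) = c / 4 * t := by
      have hB1 : (B:ℝ) + 1 ≠ 0 := by positivity
      field_simp
      exact hpow
    calc B * t ^ (1 - ε) * Real.log t ≤ (B + 1) * t ^ (1 - ε) * Real.log t := step1
      _ ≤ (B + 1) * t ^ (1 - ε) * (c / (4 * (B + 1)) * t ^ ε) := step2
      _ = c / 4 * t := step3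
  have hdist : (C₀ + B * t ^ (1 - ε)) * Real.log t
      = C₀ * Real.log t + B * t ^ (1 - ε) * Real.log t := by ring
  have hfinal : c * t ≤ c / 2 * t :=
    calc c * t ≤ φ t * Real.log t := hct
      _ ≤ (C₀ + B * t ^ (1 - ε)) * Real.log t := hmul
      _ = C₀ * Real.log t + B * t ^ (1 - ε) * Real.log t := hdist
      _ ≤ c / 4 * t + c / 4 * t := add_le_add hterm1 hterm2
      _ = c / 2 * t := by ring
  nlinarith [hfinal, hc, ht0]
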